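/- For every n ≥ 1, the thinness of the n-dimensional hypercube Q_n is at least n − 2. -/

import Mathlib

open SimpleGraph

/-- An ordering (given by an injective rank function `f`) and a partition (given by a
coloring `c`) are consistent: for `r < s < t`, if `r, s` are in the same class and
`t` is adjacent to `r`, then `t` is adjacent to `s`. -/
def Consistent {V : Type*} (G : SimpleGraph V) (f : V → ℕ) (c : V → ℕ) : Prop :=
  ∀ r s t : V, f r < f s → f s < f t → c r = c s → G.Adj t r → G.Adj t s

/-- Strong consistency: consistency with the ordering and with its reverse. -/
def StronglyConsistent {V : Type*} (G : SimpleGraph V) (f : V → ℕ) (c : V → ℕ) : Prop :=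
  Consistent G f c ∧
    ∀ r s t : V, f r < f s → f s < f t → c s = c t → G.Adj t r → G.Adj s r

/-- The thinness of a graph. -/
noncomputable def thin {V : Type*} (G : SimpleGraph V) : ℕ :=
  sInf {k | ∃ f c : V → ℕ, Function.Injective f ∧ (∀ v, c v < k) ∧ Consistent G f c}

/-- The proper thinness of a graph. -/
noncomputable def pthin {V : Type*} (G : SimpleGraph V) : ℕ :=
  sInf {k | ∃ f c : V → ℕ, Function.Injective f ∧ (∀ v, c v < k) ∧ StronglyConsistent G f c}

/-- Independent thinness: classes must be independent sets. -/
noncomputable def indthin {V : Type*} (G : SimpleGraph V) : ℕ :=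
  sInf {k | ∃ f c : V → ℕ, Function.Injective f ∧ (∀ v, c v < k) ∧ Consistent G f c ∧
    ∀ u v : V, c u = c v → ¬ G.Adj u v}

/-- Independent proper thinness. -/
noncomputable def indpthin {V : Type*} (G : SimpleGraph V) : ℕ :=
  sInf {k | ∃ f c : V → ℕ, Function.Injective f ∧ (∀ v, c v < k) ∧ StronglyConsistent G f c ∧
    ∀ u v : V, c u = c v → ¬ G.Adj u v}

/-- Complete thinness: classes must be cliques. -/
noncomputable def compthin {V : Type*} (G : SimpleGraph V) : ℕ :=
  sInf {k | ∃ f c : V → ℕ, Function.Injective f ∧ (∀ v, c v < k) ∧ Consistent G f c ∧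
    ∀ u v : V, u ≠ v → c u = c v → G.Adj u v}

/-- Complete proper thinness. -/
noncomputable def comppthin {V : Type*} (G : SimpleGraph V) : ℕ :=
  sInf {k | ∃ f c : V → ℕ, Function.Injective f ∧ (∀ v, c v < k) ∧ StronglyConsistent G f c ∧
    ∀ u v : V, u ≠ v → c u = c v → G.Adj u v}

/-- The incompatibility graph `G_<` of a graph and an ordering: for `v < w`,
`vw` is an edge iff there is `z > w` adjacent to `v` but not to `w`. -/
def incompat {V : Type*} (G : SimpleGraph V) (f : V → ℕ) : SimpleGraph V where
  Adj v w :=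
    (f v < f w ∧ ∃ z, f w < f z ∧ G.Adj z v ∧ ¬ G.Adj z w) ∨
    (f w < f v ∧ ∃ z, f v < f z ∧ G.Adj z w ∧ ¬ G.Adj z v)
  symm := ⟨fun v w h => h.symm⟩
  loopless := ⟨fun v h => by rcases h with ⟨h, _⟩ | ⟨h, _⟩ <;> exact lt_irrefl _ h⟩

/-- The join of two graphs. -/
def joinG {V₁ V₂ : Type*} (G₁ : SimpleGraph V₁) (G₂ : SimpleGraph V₂) :
    SimpleGraph (V₁ ⊕ V₂) where
  Adj x y := match x, y with
    | Sum.inl u, Sum.inl v => G₁.Adj u v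
    | Sum.inr u, Sum.inr v => G₂.Adj u v
    | Sum.inl _, Sum.inr _ => True
    | Sum.inr _, Sum.inl _ => True
  symm := by constructor
             rintro (u | u) (v | v) h
             · exact G₁.symm.symm _ _ h
             · trivial
             · trivial
             · exact G₂.symm.symm _ _ h
  loopless := by constructor
                 rintro (u | u) h
                 · exact G₁.loopless.irrefl u h
                 · exact G₂.loopless.irrefl u h

/-- A graph is complete iff all pairs of distinct vertices are adjacent. -/
def IsCompleteGraph {V : Type*} (G : SimpleGraph V) : Prop :=
  ∀ u v : V, u ≠ v → G.Adj u v

/-- The clique number of a graph. -/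
noncomputable def omegaNum {V : Type*} (G : SimpleGraph V) : ℕ :=
  sSup {n | ∃ s : Finset V, s.card = n ∧ ∀ u ∈ s, ∀ v ∈ s, u ≠ v → G.Adj u v}

/-- The independence number of a graph. -/
noncomputable def alphaNum {V : Type*} (G : SimpleGraph V) : ℕ :=
  sSup {n | ∃ s : Finset V, s.card = n ∧ ∀ u ∈ s, ∀ v ∈ s, u ≠ v → ¬ G.Adj u v}


/-- The `n`-dimensional hypercube: binary strings of length `n`, adjacent iff
they differ in exactly one position. -/
def hypercube (n : ℕ) : SimpleGraph (Fin n → Bool) where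
  Adj u v := ∃ i, u i ≠ v i ∧ ∀ j, u j ≠ v j → j = i
  symm := ⟨fun u v ⟨i, hi, h⟩ => ⟨i, hi.symm, fun j hj => h j hj.symm⟩⟩
  loopless := ⟨fun u ⟨i, hi, _⟩ => hi rfl⟩

section AuxHyp

open Finset

variable {n : ℕ}

private instance : DecidableRel (hypercube n).Adj := fun u v =>
  decidable_of_iff (∃ i, u i ≠ v i ∧ ∀ j, u j ≠ v j → j = i) Iff.rfl

private lemma hyp_adj_update {t x : Fin n → Bool} (h : (hypercube n).Adj t x) :
    ∃ i, t = Function.update x i (!(x i)) ∧ t i ≠ x i ∧ ∀ j, t j ≠ x j → j = i := by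
  obtain ⟨i, hi, hu⟩ := h
  refine ⟨i, ?_, hi, hu⟩
  funext j
  by_cases hj : j = i
  · subst hj
    rw [Function.update_self]
    revert hi; cases t j <;> cases x j <;> simp
  · rw [Function.update_of_ne hj]
    by_contra hne
    exact hj (hu j hne)

private lemma hyp_deg (x : Fin n → Bool) :
    (Finset.univ.filter (fun t => (hypercube n).Adj t x)).card = n := by
  classical
  have h : (Finset.univ : Finset (Fin n)).card =
      (Finset.univ.filter (fun t => (hypercube n).Adj t x)).card := by
    apply Finset.card_bij (fun i _ => Function.update x i (!(x i)))
    · intro i _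
      simp only [Finset.mem_filter, Finset.mem_univ, true_and]
      refine ⟨i, ?_, ?_⟩
      · rw [Function.update_self]; cases x i <;> simp
      · intro j hj
        by_contra hne
        rw [Function.update_of_ne hne] at hj
        exact hj rfl
    · intro i _ i' _ h
      by_contra hne
      have := congrFun h i
      rw [Function.update_self] at this
      rw [Function.update_of_ne hne] at this
      revert this; cases x i <;> simp
    · intro t ht
      simp only [Finset.mem_filter, Finset.mem_univ, true_and] at ht
      obtain ⟨i, heq, _, _⟩ := hyp_adj_update ht
      exact ⟨i, Finset.mem_univ i, heq.symm⟩
  simpa using h.symm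

private lemma hyp_common (x y : Fin n → Bool) (hxy : x ≠ y) :
    (Finset.univ.filter
      (fun t => (hypercube n).Adj t x ∧ (hypercube n).Adj t y)).card ≤ 2 := by
  classical
  rcases Finset.eq_empty_or_nonempty
      (Finset.univ.filter (fun t => (hypercube n).Adj t x ∧ (hypercube n).Adj t y)) with he | hne
  · rw [he]; simp
  · obtain ⟨t0, ht0⟩ := hne
    simp only [Finset.mem_filter, Finset.mem_univ, true_and] at ht0
    obtain ⟨i0, ht0eq, hi0, hu0⟩ := hyp_adj_update ht0.1
    obtain ⟨j0, hj0, hv0⟩ := ht0.2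
    have hsub : Finset.univ.filter (fun t => (hypercube n).Adj t x ∧ (hypercube n).Adj t y) ⊆
        {Function.update x i0 (!(x i0)), Function.update x j0 (!(x j0))} := by
      intro t ht
      simp only [Finset.mem_filter, Finset.mem_univ, true_and] at ht
      obtain ⟨i, hteq, hi, hu⟩ := hyp_adj_update ht.1
      obtain ⟨j, hj, hv⟩ := ht.2
      -- first: x i ≠ y i
      have hxyi : x i ≠ y i := by
        intro hEq
        have hij : i = j := by
          apply hv
          rw [hteq, Function.update_self, ← hEq]
          cases x i <;> simp
        apply hxy
        funext m
        by_contra hm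
        have hmi : m ≠ i := fun h => hm (h ▸ hEq)
        have htm : t m = x m := by rw [hteq, Function.update_of_ne hmi]
        have := hv m (by rw [htm]; exact hm)
        exact hmi (this.trans hij.symm)
      -- i ∈ {i0, j0}
      have : i = i0 ∨ i = j0 := by
        by_cases hii0 : i = i0
        · exact Or.inl hii0
        · have ht0i : t0 i = x i := by
            by_contra h
            exact hii0 (hu0 i h)
          exact Or.inr (hv0 i (by rw [ht0i]; exact hxyi))
      rcases this with h | h <;> rw [hteq, h] <;> simp
    calc _ ≤ ({Function.update x i0 (!(x i0)), Function.update x j0 (!(x j0))} :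
          Finset (Fin n → Bool)).card := Finset.card_le_card hsub
      _ ≤ 2 := Finset.card_insert_le _ _ |>.trans (by simp)

end AuxHyp

/-- For every `n ≥ 1`, the thinness of the `n`-dimensional hypercube is at least `n - 2`. -/
theorem thin_hypercube (n : ℕ) (hn : 1 ≤ n) : n - 2 ≤ thin (hypercube n) := by
  classical
  apply le_csInf
  · -- the defining set is nonempty
    refine ⟨Fintype.card (Fin n → Bool), fun v => ((Fintype.equivFin _) v : ℕ),
      fun v => ((Fintype.equivFin _) v : ℕ), ?_, ?_, ?_⟩
    · intro a b h
      exact (Fintype.equivFin _).injective (Fin.val_injective h)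
    · intro v
      exact ((Fintype.equivFin _) v).isLt
    · intro r s t hrs _ hcs hadj
      have : r = s := (Fintype.equivFin _).injective (Fin.val_injective hcs)
      subst this
      exact hadj
  · rintro k ⟨f, c, hinj, hc, hcons⟩
    -- rank of a vertex in the ordering
    set rk : (Fin n → Bool) → ℕ :=
      fun v => (Finset.univ.filter (fun u => f u < f v)).card with hrk
    have hrkmono : ∀ {x y : Fin n → Bool}, f x < f y → rk x < rk y := by
      intro x y hxy
      apply Finset.card_lt_card
      rw [Finset.ssubset_iff_of_subset
        (fun u hu => by
          simp only [Finset.mem_filter, Finset.mem_univ, true_and] at hu ⊢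
          exact hu.trans hxy)]
      exact ⟨x, by simp [hxy], by simp⟩
    have hrklt : ∀ v, rk v < Fintype.card (Fin n → Bool) := by
      intro v
      have hsub : Finset.univ.filter (fun u => f u < f v) ⊆ Finset.univ.erase v := by
        intro u hu
        simp only [Finset.mem_filter, Finset.mem_univ, true_and] at hu
        exact Finset.mem_erase.mpr ⟨fun h => absurd (h ▸ hu) (lt_irrefl _), Finset.mem_univ u⟩
      calc rk v ≤ (Finset.univ.erase v).card := Finset.card_le_card hsub
        _ < Finset.univ.card := Finset.card_erase_lt_of_mem (Finset.mem_univ v)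
        _ = Fintype.card (Fin n → Bool) := Finset.card_univ
    have hrkinj : Function.Injective
        (fun v => (⟨rk v, hrklt v⟩ : Fin (Fintype.card (Fin n → Bool)))) := by
      intro a b h
      by_contra hne
      have hf : f a ≠ f b := fun h' => hne (hinj h')
      have hval : rk a = rk b := congrArg Fin.val h
      rcases hf.lt_or_gt with h' | h'
      · exact absurd hval (Nat.ne_of_lt (hrkmono h'))
      · exact absurd hval.symm (Nat.ne_of_lt (hrkmono h'))
    have hrksurj : Function.Surjective
        (fun v => (⟨rk v, hrklt v⟩ : Fin (Fintype.card (Fin n → Bool)))) :=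
      ((Fintype.bijective_iff_injective_and_card _).mpr ⟨hrkinj, by simp⟩).2
    -- the key counting claim
    have key : ∀ x y : Fin n → Bool, c x = c y → f x < f y → n ≤ rk y + 2 := by
      intro x y hcxy hfxy
      have hxy : x ≠ y := fun h => absurd hfxy (by rw [h]; exact lt_irrefl _)
      set A := Finset.univ.filter (fun t => (hypercube n).Adj t x) with hAdef
      have hsplit : (A.filter (fun t => f y < f t)).card
          + (A.filter (fun t => ¬ f y < f t)).card = A.card :=
        Finset.card_filter_add_card_filter_not _
      have h2 : (A.filter (fun t => f y < f t)).card ≤ 2 := by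
        refine le_trans (Finset.card_le_card ?_) (hyp_common x y hxy)
        intro t ht
        simp only [hAdef, Finset.mem_filter, Finset.mem_univ, true_and] at ht ⊢
        exact ⟨ht.1, hcons x y t hfxy ht.2 hcxy ht.1⟩
      have h1 : (A.filter (fun t => ¬ f y < f t)).card ≤ rk y := by
        have hsub : A.filter (fun t => ¬ f y < f t) ⊆
            (insert y (Finset.univ.filter (fun u => f u < f y))).erase x := by
          intro t ht
          simp only [hAdef, Finset.mem_filter, Finset.mem_univ, true_and, not_lt] at ht
          obtain ⟨hadj, hle⟩ := ht
          have htx : t ≠ x := fun h => (hypercube n).loopless.irrefl x (h ▸ hadj)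
          rw [Finset.mem_erase]
          refine ⟨htx, ?_⟩
          rcases lt_or_eq_of_le hle with h | h
          · exact Finset.mem_insert_of_mem (by simp [h])
          · rw [hinj h]
            exact Finset.mem_insert_self y _
        calc _ ≤ ((insert y (Finset.univ.filter (fun u => f u < f y))).erase x).card :=
              Finset.card_le_card hsub
          _ = (insert y (Finset.univ.filter (fun u => f u < f y))).card - 1 :=
              Finset.card_erase_of_mem
                (Finset.mem_insert_of_mem (by simp [hfxy]))
          _ = (rk y + 1) - 1 := by
              rw [Finset.card_insert_of_notMem (by simp)]
          _ = rk y := rfl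
      have hn' : A.card = n := hyp_deg x
      omega
    -- build an injection Fin (n-2) → Fin k from the colors
    have hcardV : n - 2 ≤ Fintype.card (Fin n → Bool) := by
      have h1 : n < 2 ^ n := Nat.lt_two_pow_self
      have h2 : Fintype.card (Fin n → Bool) = 2 ^ n := by simp
      omega
    by_contra hlt
    push_neg at hlt
    -- k < n - 2; pick vertices of ranks 0, ..., n-3 with distinct colors
    have hkpos : ∀ m : Fin (n - 2), (m : ℕ) < Fintype.card (Fin n → Bool) :=
      fun m => lt_of_lt_of_le m.isLt hcardV
    let vtx : Fin (n - 2) → (Fin n → Bool) :=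
      fun m => (hrksurj ⟨m, hkpos m⟩).choose
    have hvtx : ∀ m, rk (vtx m) = (m : ℕ) := by
      intro m
      have := (hrksurj ⟨m, hkpos m⟩).choose_spec
      exact congrArg Fin.val this
    have hι : Function.Injective (fun m : Fin (n - 2) => (⟨c (vtx m), hc _⟩ : Fin k)) := by
      intro a b hab
      by_contra hne
      have hcc : c (vtx a) = c (vtx b) := congrArg Fin.val hab
      have hvne : vtx a ≠ vtx b := by
        intro h
        apply hne
        have : (a : ℕ) = (b : ℕ) := by rw [← hvtx a, ← hvtx b, h]
        exact Fin.ext this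
      have hf : f (vtx a) ≠ f (vtx b) := fun h => hvne (hinj h)
      rcases hf.lt_or_gt with h | h
      · have := key _ _ hcc h
        have hb := hvtx b
        have := b.isLt
        omega
      · have := key _ _ hcc.symm h
        have ha := hvtx a
        have := a.isLt
        omega
    have := Fintype.card_le_of_injective _ hι
    simp only [Fintype.card_fin] at this
    omega
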